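/- Let M be a von Neumann algebra, let ν, ρ be positive linear forms on M, and suppose x ∈ Min_M(ν,ρ). Then Min_M(ν,ρ) = { x + k : k ∈ I_ν } ∩ { z ∈ M : z positive invertible }, where I_ν = { k ∈ M : ν(k*k) = 0 } is the left kernel ideal of ν. That is, a positive invertible z ∈ M belongs to Min_M(ν,ρ) if and only if ν((z−x)*(z−x)) = 0. -/

import Mathlib

open scoped ComplexOrder

noncomputable section

variable {H : Type*} [NormedAddCommGroup H] [InnerProductSpace ℂ H] [CompleteSpace H]

/-- A von Neumann algebra is closed under scalar multiplication by complex numbers. -/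
instance VonNeumannAlgebra.instSMulMemClass :
    SMulMemClass (VonNeumannAlgebra H) ℂ (H →L[ℂ] H) where
  smul_mem {s} c x hx := s.toStarSubalgebra.smul_mem hx c

private lemma isClosed_centralizer' {A : Type*} [NormedRing A] (s : Set A) :
    IsClosed (Set.centralizer s) := by
  have h : Set.centralizer s = ⋂ a ∈ s, {x : A | a * x = x * a} := by
    ext x; rw [Set.mem_centralizer_iff]; simp
  rw [h]
  exact isClosed_biInter fun a _ =>
    isClosed_eq (continuous_const.mul continuous_id) (continuous_id.mul continuous_const)

/-- A von Neumann algebra is norm-closed in `B(H)`; consequently the subtype `↥M`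
inherits a C*-algebra structure. -/
instance VonNeumannAlgebra.instIsClosed (M : VonNeumannAlgebra H) :
    IsClosed (M : Set (H →L[ℂ] H)) :=
  M.centralizer_centralizer ▸ isClosed_centralizer' _

variable {M : VonNeumannAlgebra H}

/-- `ν` is a positive linear form on the von Neumann algebra `M`:
a bounded linear functional with `ν(x*x) ≥ 0` for all `x`. -/
def IsPosForm (ν : M →L[ℂ] ℂ) : Prop := ∀ x : M, 0 ≤ ν (star x * x)

/-- The set `Γ_M(ν,ρ) = { f ∈ M* : |f(y*x)|² ≤ ν(y*y)·ρ(x*x) for all x, y ∈ M }`. -/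
def GammaSet (ν ρ : M →L[ℂ] ℂ) : Set (M →L[ℂ] ℂ) :=
  {f | ∀ x y : M, ‖f (star y * x)‖ ^ 2 ≤ (ν (star y * y)).re * (ρ (star x * x)).re}

/-- `Min_M(ν,ρ)`: the set of positive invertible elements of `M` at which the function
`z ↦ (1/2)(ν(z) + ρ(z⁻¹))` attains its infimum over all positive invertible `z ∈ M`. -/
def MinSet (ν ρ : M →L[ℂ] ℂ) : Set M :=
  {x | (∃ w : M, x = star w * w) ∧ IsUnit x ∧
    (1/2) * ((ν x).re + (ρ (Ring.inverse x)).re) =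
      sInf {r : ℝ | ∃ z : M, (∃ w : M, z = star w * w) ∧ IsUnit z ∧
        r = (1/2) * ((ν z).re + (ρ (Ring.inverse z)).re)}}

namespace MinProofAux

lemma coeff_zero_of_forall_nonneg {C d : ℝ} (h : ∀ r : ℝ, 0 ≤ C + r * d) : d = 0 := by
  by_contra hd
  have h2 := h (-(C + 1)/d)
  rw [div_mul_cancel₀ _ hd] at h2
  linarith

lemma nonpos_of_forall_le_mul {D C t₀ : ℝ} (ht₀ : 0 < t₀) (hC : 0 ≤ C)
    (h : ∀ u : ℝ, 0 < u → u ≤ t₀ → D ≤ u * C) : D ≤ 0 := by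
  by_contra hD
  push_neg at hD
  rcases eq_or_lt_of_le hC with hC0 | hC0
  · have := h t₀ ht₀ le_rfl
    rw [← hC0, mul_zero] at this
    linarith
  · have hu : 0 < min t₀ (D/(2*C)) := lt_min ht₀ (by positivity)
    have h1 := h _ hu (min_le_left _ _)
    have h2 : min t₀ (D/(2*C)) * C ≤ (D/(2*C)) * C :=
      mul_le_mul_of_nonneg_right (min_le_right _ _) hC
    have h3 : (D/(2*C)) * C = D/2 := by field_simp
    linarith

section Dev
variable {A : Type*} [CStarAlgebra A] [PartialOrder A] [StarOrderedRing A]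

lemma expand_quad (t : ℂ) (b k : A) : star (b + t • k) * (b + t • k)
    = star b * b + t • (star b * k) + (starRingEnd ℂ t) • (star k * b)
      + (t * starRingEnd ℂ t) • (star k * k) := by
  simp only [star_add, star_smul, RCLike.star_def, add_mul, mul_add, smul_mul_assoc,
    mul_smul_comm, smul_smul, smul_add]
  abel

variable (ν : A →L[ℂ] ℂ)

lemma apply_nonneg (hν : ∀ y : A, 0 ≤ ν (star y * y)) {a : A} (ha : 0 ≤ a) : 0 ≤ ν a := by
  have h1 : a = star (CFC.sqrt a) * CFC.sqrt a := by
    rw [(IsSelfAdjoint.of_nonneg (CFC.sqrt_nonneg _)).star_eq, CFC.sqrt_mul_sqrt_self a ha]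
  rw [h1]; exact hν _

lemma re_monotone (hν : ∀ y : A, 0 ≤ ν (star y * y)) {a b : A} (hab : a ≤ b) :
    (ν a).re ≤ (ν b).re := by
  have h := apply_nonneg ν hν (sub_nonneg.mpr hab)
  have h2 := (Complex.nonneg_iff.mp h).1
  rw [map_sub, Complex.sub_re] at h2
  linarith

lemma real_smul_apply (r : ℝ) (a : A) : ν (r • a) = r • ν a := by
  rw [← Complex.coe_smul, map_smul, Complex.coe_smul]

lemma expand_apply (t : ℂ) (b k : A) : ν (star (b + t • k) * (b + t • k))
    = ν (star b * b) + t * ν (star b * k) + (starRingEnd ℂ t) * ν (star k * b)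
      + (t * starRingEnd ℂ t) * ν (star k * k) := by
  rw [expand_quad, map_add, map_add, map_add, map_smul, map_smul, map_smul]
  simp [smul_eq_mul]

lemma star_apply (hν : ∀ y : A, 0 ≤ ν (star y * y)) (a : A) :
    ν (star a) = starRingEnd ℂ (ν a) := by
  have him : ∀ b : A, (ν (star b * b)).im = 0 := fun b => ((Complex.nonneg_iff.mp (hν b)).2).symm
  have him1 : (ν (1:A)).im = 0 := by simpa using him 1
  have h1 : (ν a).im + (ν (star a)).im = 0 := by
    have h := him (1 + (1:ℂ) • a)
    rw [expand_apply ν (1:ℂ) 1 a] at h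
    simpa [him1, him a] using h
  have h2 : (ν a).re - (ν (star a)).re = 0 := by
    have h := him (1 + Complex.I • a)
    rw [expand_apply ν Complex.I 1 a] at h
    simp only [Complex.conj_I, mul_neg, Complex.I_mul_I, neg_neg, one_mul, star_one,
      mul_one] at h
    simp only [Complex.add_im, Complex.mul_im, Complex.neg_re, Complex.neg_im,
      Complex.I_re, Complex.I_im, him1, him a] at h
    linarith
  apply Complex.ext
  · rw [Complex.conj_re]; linarith
  · rw [Complex.conj_im]; linarith

lemma null_right (hν : ∀ y : A, 0 ≤ ν (star y * y)) {k : A} (hk : ν (star k * k) = 0)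
    (b : A) : ν (star b * k) = 0 := by
  have hherm : ν (star k * b) = starRingEnd ℂ (ν (star b * k)) := by
    have h : star k * b = star (star b * k) := by simp [star_mul]
    rw [h, star_apply ν hν]
  set c := ν (star b * k) with hc
  have hre : c.re = 0 := by
    have key : ∀ r : ℝ, 0 ≤ (ν (star b * b)).re + r * (2 * c.re) := by
      intro r
      have h := (Complex.nonneg_iff.mp (hν (b + (r:ℂ) • k))).1
      rw [expand_apply ν (r:ℂ) b k, hherm, hk] at h
      simp only [Complex.conj_ofReal, Complex.add_re, Complex.mul_re, Complex.conj_re,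
        Complex.conj_im, Complex.ofReal_re, Complex.ofReal_im, mul_zero, Complex.zero_re] at h
      linarith
    have := coeff_zero_of_forall_nonneg key
    linarith
  have him : c.im = 0 := by
    have key : ∀ r : ℝ, 0 ≤ (ν (star b * b)).re + r * (-2 * c.im) := by
      intro r
      have h := (Complex.nonneg_iff.mp (hν (b + ((r:ℝ) • Complex.I) • k))).1
      rw [expand_apply ν _ b k, hherm, hk] at h
      simp only [Complex.real_smul, map_mul, Complex.conj_I, Complex.conj_ofReal,
        Complex.add_re, Complex.mul_re, Complex.mul_im, Complex.conj_re, Complex.conj_im,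
        Complex.I_re, Complex.I_im, Complex.ofReal_re, Complex.ofReal_im, Complex.neg_re,
        Complex.neg_im, mul_zero, Complex.zero_re] at h
      linarith
    have := coeff_zero_of_forall_nonneg key
    linarith
  exact Complex.ext hre him

lemma null_left (hν : ∀ y : A, 0 ≤ ν (star y * y)) {k : A} (hk : ν (star k * k) = 0)
    (b : A) : ν (star k * b) = 0 := by
  have h : star k * b = star (star b * k) := by simp [star_mul]
  rw [h, star_apply ν hν, null_right ν hν hk b, map_zero]


section Units

lemma unit_of_mul_eq_one {a b : A} (h1 : a * b = 1) (h2 : b * a = 1) :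
    IsUnit a ∧ Ring.inverse a = b := by
  have hu : IsUnit a := ⟨⟨a, b, h1, h2⟩, rfl⟩
  refine ⟨hu, ?_⟩
  rw [show a = ↑(⟨a, b, h1, h2⟩ : Aˣ) from rfl, Ring.inverse_unit]
  rfl

lemma inverse_mul {a : A} (ha : IsUnit a) : Ring.inverse a * a = 1 :=
  Ring.inverse_mul_cancel a ha

lemma mul_inverse {a : A} (ha : IsUnit a) : a * Ring.inverse a = 1 :=
  Ring.mul_inverse_cancel a ha

lemma ring_inverse_spec {a : A} (hu : IsUnit a) : Ring.inverse a = ↑hu.unit⁻¹ := by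
  conv_lhs => rw [← hu.unit_spec]
  exact Ring.inverse_unit hu.unit

lemma inverse_nonneg {a : A} (ha : 0 ≤ a) (hu : IsUnit a) : 0 ≤ Ring.inverse a := by
  rw [ring_inverse_spec hu]
  exact CFC.inv_nonneg_of_nonneg hu.unit (by rwa [hu.unit_spec])

lemma smul_nonneg'' {r : ℝ} (hr : 0 ≤ r) {a : A} (ha : 0 ≤ a) : 0 ≤ r • a := by
  obtain ⟨w, hw⟩ : ∃ w : A, a = star w * w :=
    ⟨CFC.sqrt a, by rw [(IsSelfAdjoint.of_nonneg (CFC.sqrt_nonneg _)).star_eq,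
      CFC.sqrt_mul_sqrt_self a ha]⟩
  have : r • a = star ((Real.sqrt r : ℂ) • w) * ((Real.sqrt r : ℂ) • w) := by
    rw [star_smul, smul_mul_smul_comm, hw]
    rw [RCLike.star_def, Complex.conj_ofReal, ← Complex.ofReal_mul,
      Real.mul_self_sqrt hr, Complex.coe_smul]
  rw [this]
  exact star_mul_self_nonneg _

lemma algebraMap_nonneg' {r : ℝ} (hr : 0 ≤ r) : (0:A) ≤ algebraMap ℝ A r := by
  rw [Algebra.algebraMap_eq_smul_one]
  exact smul_nonneg'' hr zero_le_one

lemma isUnit_algebraMap {r : ℝ} (hr : r ≠ 0) : IsUnit (algebraMap ℝ A r) :=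
  (unit_of_mul_eq_one (b := algebraMap ℝ A r⁻¹)
    (by rw [← map_mul, mul_inv_cancel₀ hr, map_one])
    (by rw [← map_mul, inv_mul_cancel₀ hr, map_one])).1

/-- conjugation bound : `star v * T * v ≤ K • (star v * v)` when `0 ≤ T ≤ K•1`. -/
lemma conj_bound {T : A} (K : ℝ) (hTK : T ≤ algebraMap ℝ A K) (v : A) :
    star v * T * v ≤ K • (star v * v) := by
  have h := star_left_conjugate_le_conjugate hTK v
  rwa [Algebra.algebraMap_eq_smul_one, mul_smul_comm, mul_one, smul_mul_assoc] at h

/-- if `δ•1 ≤ a` with `δ > 0` then `a` is a positive unit and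
`Ring.inverse a ≤ δ⁻¹ • 1`. -/
lemma inverse_le_of_le {δ : ℝ} (hδ : 0 < δ) {a : A} (h : algebraMap ℝ A δ ≤ a) :
    IsUnit a ∧ Ring.inverse a ≤ algebraMap ℝ A δ⁻¹ := by
  have h0 : (0:A) ≤ algebraMap ℝ A δ := algebraMap_nonneg' hδ.le
  have hu : IsUnit a := CStarAlgebra.isUnit_of_le _ h ((isUnit_algebraMap hδ.ne').isStrictlyPositive h0)
  refine ⟨hu, ?_⟩
  have hδu : IsUnit (algebraMap ℝ A δ) := isUnit_algebraMap hδ.ne'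
  have key := CStarAlgebra.inv_le_inv (a := hδu.unit) (b := hu.unit)
    (by rw [hδu.unit_spec]; exact h0) (by rw [hδu.unit_spec, hu.unit_spec]; exact h)
  have e1 : (↑hu.unit⁻¹ : A) = Ring.inverse a := (ring_inverse_spec hu).symm
  have e2 : (↑hδu.unit⁻¹ : A) = algebraMap ℝ A δ⁻¹ := by
    have h3 := (unit_of_mul_eq_one (a := algebraMap ℝ A δ) (b := algebraMap ℝ A δ⁻¹)
      (by rw [← map_mul, mul_inv_cancel₀ hδ.ne', map_one])
      (by rw [← map_mul, inv_mul_cancel₀ hδ.ne', map_one])).2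
    rw [← h3, ring_inverse_spec hδu]
  rw [← e1, ← e2]
  exact key

/-- if `0 ≤ b ≤ K•1` with `b` a unit, then `K⁻¹•1 ≤ Ring.inverse b`. -/
lemma le_inverse_of_le {K : ℝ} (hK : 0 < K) {b : A} (hb0 : 0 ≤ b) (hbu : IsUnit b)
    (h : b ≤ algebraMap ℝ A K) : algebraMap ℝ A K⁻¹ ≤ Ring.inverse b := by
  have hKu : IsUnit (algebraMap ℝ A K) := isUnit_algebraMap hK.ne'
  have key := CStarAlgebra.inv_le_inv (a := hbu.unit) (b := hKu.unit)
    (by rw [hbu.unit_spec]; exact hb0) (by rw [hbu.unit_spec, hKu.unit_spec]; exact h)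
  have e1 : (↑hbu.unit⁻¹ : A) = Ring.inverse b := (ring_inverse_spec hbu).symm
  have e2 : (↑hKu.unit⁻¹ : A) = algebraMap ℝ A K⁻¹ := by
    have h3 := (unit_of_mul_eq_one (a := algebraMap ℝ A K) (b := algebraMap ℝ A K⁻¹)
      (by rw [← map_mul, mul_inv_cancel₀ hK.ne', map_one])
      (by rw [← map_mul, inv_mul_cancel₀ hK.ne', map_one])).2
    rw [← h3, ring_inverse_spec hKu]
  rw [← e1, ← e2]
  exact key

/-- a positive unit dominates a positive multiple of the identity. -/
lemma exists_algebraMap_le [Nontrivial A] {a : A} (ha : 0 ≤ a) (hu : IsUnit a) :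
    ∃ δ : ℝ, 0 < δ ∧ algebraMap ℝ A δ ≤ a := by
  set p := Ring.inverse a with hp
  have hpu : IsUnit p := hu.ringInverse
  have hp0 : 0 ≤ p := inverse_nonneg ha hu
  have hpn : (0:ℝ) < ‖p‖ := norm_pos_iff.mpr hpu.ne_zero
  have hle : p ≤ algebraMap ℝ A ‖p‖ := (IsSelfAdjoint.of_nonneg hp0).le_algebraMap_norm_self
  refine ⟨‖p‖⁻¹, by positivity, ?_⟩
  have key := le_inverse_of_le hpn hp0 hpu hle
  have e : Ring.inverse p = a :=
    (unit_of_mul_eq_one (inverse_mul hu) (mul_inverse hu)).2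
  rwa [e] at key

end Units

lemma algebraMap_mono' {r s : ℝ} (h : r ≤ s) : algebraMap ℝ A r ≤ algebraMap ℝ A s := by
  rw [← sub_nonneg, ← map_sub]
  exact algebraMap_nonneg' (sub_nonneg.mpr h)

lemma inverse_star_eq {a : A} (hsa : star a = a) (hu : IsUnit a) :
    star (Ring.inverse a) = Ring.inverse a := by
  have h2 := mul_inverse hu
  have h3 : star (Ring.inverse a) * a = 1 := by
    calc star (Ring.inverse a) * a = star (Ring.inverse a) * star a := by rw [hsa]
    _ = star (a * Ring.inverse a) := (star_mul _ _).symm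
    _ = 1 := by rw [h2, star_one]
  calc star (Ring.inverse a) = star (Ring.inverse a) * (a * Ring.inverse a) := by
        rw [h2, mul_one]
  _ = (star (Ring.inverse a) * a) * Ring.inverse a := by rw [mul_assoc]
  _ = Ring.inverse a := by rw [h3, one_mul]

lemma smul_re (r : ℝ) (c : ℂ) : (r • c).re = r * c.re := by
  rw [Complex.real_smul]
  simp [Complex.mul_re]

/-- The first-order condition at an interior minimizer. -/
lemma foc [Nontrivial A] (ν ρ : A →L[ℂ] ℂ)
    (hν : ∀ y : A, 0 ≤ ν (star y * y)) (hρ : ∀ y : A, 0 ≤ ρ (star y * y))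
    {x : A} (hx0 : 0 ≤ x) (hxu : IsUnit x)
    (hmin : ∀ z : A, 0 ≤ z → IsUnit z →
      (ν x).re + (ρ (Ring.inverse x)).re ≤ (ν z).re + (ρ (Ring.inverse z)).re)
    (b : A) : ν b = ρ (Ring.inverse x * b * Ring.inverse x) := by
  set p := Ring.inverse x with hpdef
  have hpx : p * x = 1 := inverse_mul hxu
  have hxp : x * p = 1 := mul_inverse hxu
  have hp0 : 0 ≤ p := inverse_nonneg hx0 hxu
  have hxsa : star x = x := (IsSelfAdjoint.of_nonneg hx0).star_eq
  have hpsa : star p = p := inverse_star_eq hxsa hxu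
  have mainre : ∀ a : A, star a = a → (ν a).re = (ρ (p * a * p)).re := by
    intro a hasa
    obtain ⟨δ, hδ, hδx⟩ := exists_algebraMap_le hx0 hxu
    set t₀ : ℝ := (δ/2) / (‖a‖ + 1) with ht₀def
    have ht₀ : 0 < t₀ := by positivity
    set C : ℝ := (δ/2)⁻¹ * (ρ (star (a * p) * (a * p))).re with hCdef
    have hCnn : 0 ≤ C :=
      mul_nonneg (by positivity) (Complex.nonneg_iff.mp (hρ (a * p))).1
    set D : ℝ := (ν a).re - (ρ (p * a * p)).re with hDdef
    have key : ∀ t : ℝ, |t| ≤ t₀ → 0 ≤ t * D + t^2 * C := by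
      intro t ht
      have hsmulsa : star (t • a) = t • a := by rw [star_smul, star_trivial, hasa]
      have hnorm : ‖t • a‖ ≤ δ/2 := by
        rw [norm_smul, Real.norm_eq_abs]
        calc |t| * ‖a‖ ≤ t₀ * ‖a‖ :=
              mul_le_mul_of_nonneg_right ht (norm_nonneg a)
        _ = (δ/2) * (‖a‖ / (‖a‖ + 1)) := by rw [ht₀def]; ring
        _ ≤ (δ/2) * 1 := by
              apply mul_le_mul_of_nonneg_left _ (by positivity)
              rw [div_le_one (by positivity)]; linarith
        _ = δ/2 := mul_one _
      have hlow : algebraMap ℝ A (δ/2) ≤ x + t • a := by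
        have h1 : -(algebraMap ℝ A (δ/2)) ≤ t • a := by
          refine le_trans ?_ (IsSelfAdjoint.neg_algebraMap_norm_le_self hsmulsa)
          rw [neg_le_neg_iff]
          exact algebraMap_mono' hnorm
        have h2 : algebraMap ℝ A (δ/2) = algebraMap ℝ A δ + -(algebraMap ℝ A (δ/2)) := by
          rw [← map_neg, ← map_add]; congr 1; ring
        rw [h2]
        exact add_le_add hδx h1
      obtain ⟨hu_t, hinv_le⟩ := inverse_le_of_le (by positivity : (0:ℝ) < δ/2) hlow
      set y := Ring.inverse (x + t • a) with hydef
      have h0_t : (0:A) ≤ x + t • a := le_trans (algebraMap_nonneg' (by positivity)) hlow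
      have hy0 : 0 ≤ y := inverse_nonneg h0_t hu_t
      have hys : (x + t • a) * y = 1 := mul_inverse hu_t
      have hsy : y * (x + t • a) = 1 := inverse_mul hu_t
      -- resolvent expansion
      have e1 : y = p - t • (p * a * y) := by
        have h3 : p * ((x + t • a) * y) = p := by rw [hys, mul_one]
        rw [add_mul, mul_add, smul_mul_assoc, mul_smul_comm,
          ← mul_assoc p x y, hpx, one_mul, ← mul_assoc p a y] at h3
        rw [eq_sub_iff_add_eq, h3]
      have e2 : y = p - t • (y * a * p) := by
        have h3 : (y * (x + t • a)) * p = p := by rw [hsy, one_mul]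
        rw [mul_add, add_mul, mul_smul_comm, smul_mul_assoc,
          mul_assoc y x p, hxp, mul_one] at h3
        rw [eq_sub_iff_add_eq, h3]
      have E : y = p - t • (p * a * p) + (t * t) • (p * a * (y * a * p)) := by
        calc y = p - t • (p * a * y) := e1
        _ = p - t • (p * a * (p - t • (y * a * p))) := by rw [← e2]
        _ = p - t • (p * a * p - t • (p * a * (y * a * p))) := by
              rw [mul_sub, mul_smul_comm]
        _ = p - (t • (p * a * p) - t • (t • (p * a * (y * a * p)))) := by rw [smul_sub]
        _ = p - t • (p * a * p) + (t * t) • (p * a * (y * a * p)) := by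
              rw [smul_smul]; abel
      -- apply ρ and take real parts
      have hrho := congrArg (fun w => (ρ w).re) E
      simp only [map_add, map_sub, real_smul_apply, smul_re, Complex.add_re,
        Complex.sub_re] at hrho
      -- bound the second order term
      set R : ℝ := (ρ (p * a * (y * a * p))).re with hRdef
      have hsq : p * a * (y * a * p) = star (a * p) * y * (a * p) := by
        rw [star_mul, hasa, hpsa]
        simp only [mul_assoc]
      have hR0 : 0 ≤ R := by
        have h4 : (0:A) ≤ star (a * p) * y * (a * p) := star_left_conjugate_nonneg hy0 (a * p)
        have := (Complex.nonneg_iff.mp (apply_nonneg ρ hρ h4)).1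
        rwa [hRdef, hsq]
      have hRC : R ≤ C := by
        have h4 : star (a * p) * y * (a * p) ≤ (δ/2)⁻¹ • (star (a * p) * (a * p)) :=
          conj_bound _ hinv_le (a * p)
        have h5 := re_monotone ρ hρ h4
        rw [real_smul_apply, smul_re] at h5
        rw [hRdef, hsq, hCdef]
        exact h5
      -- minimality inequality
      have hM := hmin (x + t • a) h0_t hu_t
      rw [map_add, real_smul_apply] at hM
      rw [← hydef] at hM
      have hM2 : 0 ≤ t * (ν a).re + ((ρ y).re - (ρ p).re) := by
        rw [Complex.add_re, smul_re] at hM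
        linarith
      have ht2 : (t*t) * R ≤ (t*t) * C := mul_le_mul_of_nonneg_left hRC (mul_self_nonneg t)
      rw [hrho] at hM2
      rw [hDdef]
      nlinarith [sq_nonneg t]
    -- conclude D = 0
    have hD1 : D ≤ 0 := by
      refine nonpos_of_forall_le_mul ht₀ hCnn (fun u hu hut => ?_)
      have hk := key (-u) (by rwa [abs_neg, abs_of_pos hu])
      nlinarith
    have hD2 : -D ≤ 0 := by
      refine nonpos_of_forall_le_mul ht₀ hCnn (fun u hu hut => ?_)
      have hk := key u (by rwa [abs_of_pos hu])
      nlinarith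
    rw [hDdef] at hD1 hD2
    linarith
  -- upgrade to complex equality for selfadjoint elements
  have mainC : ∀ a : A, star a = a → ν a = ρ (p * a * p) := by
    intro a hasa
    have h1 : (ν a).im = 0 := by
      have := star_apply ν hν a
      rw [hasa] at this
      exact ((Complex.conj_eq_iff_im).mp this.symm)
    have h2 : (ρ (p * a * p)).im = 0 := by
      have hsa2 : star (p * a * p) = p * a * p := by
        rw [star_mul, star_mul, hasa, hpsa, mul_assoc]
      have := star_apply ρ hρ (p * a * p)
      rw [hsa2] at this
      exact ((Complex.conj_eq_iff_im).mp this.symm)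
    exact Complex.ext (mainre a hasa) (by rw [h1, h2])
  -- general b : decompose into selfadjoint parts
  set aR : A := ((1/2 : ℂ)) • (b + star b) with haR
  set aI : A := ((-Complex.I/2 : ℂ)) • (b - star b) with haI
  have hsaR : star aR = aR := by
    rw [haR, star_smul, star_add, star_star, RCLike.star_def]
    rw [show (starRingEnd ℂ) (1/2) = 1/2 by rw [map_div₀, map_one, map_ofNat]]
    module
  have hsaI : star aI = aI := by
    rw [haI, star_smul, star_sub, star_star, RCLike.star_def]
    rw [show (starRingEnd ℂ) (-Complex.I/2) = Complex.I/2 by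
      rw [map_div₀, map_neg, Complex.conj_I, map_ofNat, neg_neg]]
    module
  have hdecomp : b = aR + Complex.I • aI := by
    rw [haR, haI, smul_smul]
    rw [show Complex.I * (-Complex.I/2) = 1/2 by
      rw [← mul_div_assoc, mul_neg, Complex.I_mul_I, neg_neg]]
    module
  calc ν b = ν aR + Complex.I * ν aI := by
        rw [hdecomp]
        simp only [map_add, map_smul, smul_eq_mul]
  _ = ρ (p * aR * p) + Complex.I * ρ (p * aI * p) := by
        rw [mainC aR hsaR, mainC aI hsaI]
  _ = ρ (p * (aR + Complex.I • aI) * p) := by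
        simp only [mul_add, add_mul, mul_smul_comm, smul_mul_assoc, map_add, map_smul,
          smul_eq_mul]
  _ = ρ (p * b * p) := by rw [← hdecomp]

section AMHM

variable {x z p q s' : A}

lemma amhm (hpx : p * x = 1) (hxp : x * p = 1) (hqz : q * z = 1) (hzq : z * q = 1)
    (hs : (x + z) * s' = 1) (hs2 : s' * (x + z) = 1) :
    ((p + q) * (z * (s' * x)) = 1) ∧ ((z * (s' * x)) * (p + q) = 1) ∧
    ((p - q) * (z * (s' * x)) * (p - q) = p + q - (s' + s' + s' + s')) := by
  have hz1 : z * s' = 1 - x * s' := by rw [← hs, add_mul]; abel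
  have hx1 : s' * x = 1 - s' * z := by rw [← hs2, mul_add]; abel
  have u1 : p * (z * s') = p - s' := by
    rw [hz1, mul_sub, mul_one, ← mul_assoc, hpx, one_mul]
  have u2 : s' * (x * q) = q - s' := by
    rw [← mul_assoc, hx1, sub_mul, one_mul, mul_assoc, hzq, mul_one]
  have u3 : p * (z * (s' * (x * q))) = s' := by
    rw [u2, mul_sub, hzq, mul_sub, mul_one, u1]
    abel
  refine ⟨?_, ?_, ?_⟩
  · calc (p + q) * (z * (s' * x))
        = p * (z * s') * x + q * z * (s' * x) := by noncomm_ring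
    _ = (p - s') * x + s' * x := by rw [u1, hqz, one_mul]
    _ = p * x - s' * x + s' * x := by rw [sub_mul]
    _ = 1 := by rw [hpx]; abel
  · calc (z * (s' * x)) * (p + q)
        = z * (s' * (x * p)) + z * (s' * (x * q)) := by noncomm_ring
    _ = z * (s' * 1) + z * (q - s') := by rw [hxp, u2]
    _ = z * s' + (z * q - z * s') := by rw [mul_one, mul_sub]
    _ = 1 := by rw [hzq]; abel
  · calc (p - q) * (z * (s' * x)) * (p - q)
        = p * (z * (s' * (x * p))) - p * (z * (s' * (x * q)))
          - q * (z * (s' * (x * p))) + q * (z * (s' * (x * q))) := by noncomm_ring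
    _ = p * (z * (s' * 1)) - s' - q * (z * (s' * 1)) + q * (z * (s' * (x * q))) := by
          rw [hxp, u3]
    _ = p * (z * s') - s' - (q * z) * (s' * 1) + (q * z) * (s' * (x * q)) := by
          rw [mul_one, mul_assoc, mul_assoc]
    _ = (p - s') - s' - s' + (q - s') := by rw [u1, hqz, one_mul, one_mul, mul_one, u2]
    _ = p + q - (s' + s' + s' + s') := by abel

end AMHM

variable (ρ : A →L[ℂ] ℂ)

/-- the objective function. -/
def Fn (z : A) : ℝ := (1/2) * ((ν z).re + (ρ (Ring.inverse z)).re)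

/-- the set of values of the objective function on positive invertible elements. -/
def Sn : Set ℝ := {r : ℝ | ∃ z : A, (∃ w : A, z = star w * w) ∧ IsUnit z ∧
  r = (1/2) * ((ν z).re + (ρ (Ring.inverse z)).re)}

lemma Fn_def (z : A) : Fn ν ρ z = (1/2) * ((ν z).re + (ρ (Ring.inverse z)).re) := rfl

lemma pos_iff : ∀ z : A, (∃ w : A, z = star w * w) ↔ 0 ≤ z := fun z =>
  ⟨fun ⟨w, hw⟩ => hw ▸ star_mul_self_nonneg w,
   fun hz => ⟨CFC.sqrt z, by
     rw [(IsSelfAdjoint.of_nonneg (CFC.sqrt_nonneg _)).star_eq, CFC.sqrt_mul_sqrt_self z hz]⟩⟩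

lemma foc' [Nontrivial A]
    (hν : ∀ y : A, 0 ≤ ν (star y * y)) (hρ : ∀ y : A, 0 ≤ ρ (star y * y))
    {x : A} (hx0 : 0 ≤ x) (hxu : IsUnit x)
    (hmin : ∀ u : A, 0 ≤ u → IsUnit u → Fn ν ρ x ≤ Fn ν ρ u)
    (b : A) : ν b = ρ (Ring.inverse x * b * Ring.inverse x) := by
  refine foc ν ρ hν hρ hx0 hxu (fun u h0 hu => ?_) b
  have h := hmin u h0 hu
  rw [Fn_def, Fn_def] at h
  linarith

/-- Forward step : any other minimizer differs from `x` by an element of the kernel. -/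
lemma step_forward [Nontrivial A]
    (hν : ∀ y : A, 0 ≤ ν (star y * y)) (hρ : ∀ y : A, 0 ≤ ρ (star y * y))
    {x z : A} (hx0 : 0 ≤ x) (hxu : IsUnit x) (hz0 : 0 ≤ z) (hzu : IsUnit z)
    (hmin : ∀ u : A, 0 ≤ u → IsUnit u → Fn ν ρ x ≤ Fn ν ρ u)
    (hFz : Fn ν ρ z = Fn ν ρ x) :
    ν (star (z - x) * (z - x)) = 0 := by
  set p := Ring.inverse x with hpdef
  set q := Ring.inverse z with hqdef
  have hpx : p * x = 1 := inverse_mul hxu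
  have hxp : x * p = 1 := mul_inverse hxu
  have hqz : q * z = 1 := inverse_mul hzu
  have hzq : z * q = 1 := mul_inverse hzu
  have hp0 : 0 ≤ p := inverse_nonneg hx0 hxu
  have hq0 : 0 ≤ q := inverse_nonneg hz0 hzu
  have hxsa : star x = x := (IsSelfAdjoint.of_nonneg hx0).star_eq
  have hzsa : star z = z := (IsSelfAdjoint.of_nonneg hz0).star_eq
  have hpsa : star p = p := inverse_star_eq hxsa hxu
  have hqsa : star q = q := inverse_star_eq hzsa hzu
  -- the sum x + z and its inverse
  have hsu : IsUnit (x + z) := CStarAlgebra.isUnit_of_le _ (le_add_of_nonneg_right hz0) (hxu.isStrictlyPositive hx0)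
  have hs0 : (0:A) ≤ x + z := add_nonneg hx0 hz0
  set s' := Ring.inverse (x + z) with hs'def
  have hss' : (x + z) * s' = 1 := mul_inverse hsu
  have hs's : s' * (x + z) = 1 := inverse_mul hsu
  obtain ⟨hT1, hT2, hid⟩ := amhm hpx hxp hqz hzq hss' hs's
  set T := z * (s' * x) with hTdef
  set c := p - q with hcdef
  obtain ⟨hpqU, hpqinv⟩ := unit_of_mul_eq_one hT1 hT2
  have hpq0 : (0:A) ≤ p + q := add_nonneg hp0 hq0
  have hT0 : 0 ≤ T := by rw [← hpqinv]; exact inverse_nonneg hpq0 hpqU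
  have hcsa : star c = c := by rw [hcdef, star_sub, hpsa, hqsa]
  have hcTc0 : (0:ℂ) ≤ ρ (c * T * c) := by
    have h1 := star_left_conjugate_nonneg hT0 c
    rw [hcsa] at h1
    exact apply_nonneg ρ hρ h1
  -- midpoint is admissible
  set W : A := (1/2 : ℝ) • (x + z) with hWdef
  have hWinv : IsUnit W ∧ Ring.inverse W = (2:ℝ) • s' := by
    refine unit_of_mul_eq_one ?_ ?_
    · rw [hWdef, smul_mul_smul_comm, hss']; norm_num
    · rw [hWdef, smul_mul_smul_comm, hs's]; norm_num
  have hW0 : 0 ≤ W := smul_nonneg'' (by norm_num) hs0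
  have hFW := hmin W hW0 hWinv.1
  -- expand F W
  have hνW : (ν W).re = (1/2) * ((ν x).re + (ν z).re) := by
    rw [hWdef, real_smul_apply, smul_re, map_add, Complex.add_re]
  have hρW : (ρ (Ring.inverse W)).re = 2 * (ρ s').re := by
    rw [hWinv.2, real_smul_apply, smul_re]
  -- the value of ρ on c*T*c
  have hval : (ρ (c * T * c)).re = (ρ p).re + (ρ q).re - 4 * (ρ s').re := by
    rw [hid, map_sub, map_add, map_add, map_add, map_add]
    rw [Complex.sub_re, Complex.add_re, Complex.add_re, Complex.add_re, Complex.add_re]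
    ring
  have hcTcre : (ρ (c * T * c)).re = 0 := by
    have h1 := (Complex.nonneg_iff.mp hcTc0).1
    rw [Fn_def, Fn_def, hνW, hρW, ← hpdef] at hFW
    rw [Fn_def, Fn_def, ← hpdef, ← hqdef] at hFz
    linarith
  -- deduce ρ (c*c) = 0
  have hKpos : (0:ℝ) < ‖p + q‖ := norm_pos_iff.mpr hpqU.ne_zero
  have hub : p + q ≤ algebraMap ℝ A ‖p + q‖ :=
    (IsSelfAdjoint.of_nonneg hpq0).le_algebraMap_norm_self
  have hTlow : algebraMap ℝ A ‖p + q‖⁻¹ ≤ T := by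
    have h1 := le_inverse_of_le hKpos hpq0 hpqU hub
    rwa [hpqinv] at h1
  have hccre : (ρ (c * c)).re = 0 := by
    have h1 := star_left_conjugate_le_conjugate hTlow c
    rw [hcsa] at h1
    have h2 : c * algebraMap ℝ A ‖p + q‖⁻¹ * c = ‖p + q‖⁻¹ • (c * c) := by
      rw [Algebra.algebraMap_eq_smul_one, mul_smul_comm, mul_one, smul_mul_assoc]
    rw [h2] at h1
    have h3 := re_monotone ρ hρ h1
    rw [real_smul_apply, smul_re, hcTcre] at h3
    have h4 : (0:ℂ) ≤ ρ (c * c) := by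
      have := hρ c
      rwa [hcsa] at this
    have h5 := (Complex.nonneg_iff.mp h4).1
    have h6 : 0 < ‖p + q‖⁻¹ := by positivity
    nlinarith
  -- transfer to ν via the first order condition
  set d := z - x with hddef
  have hdsa : star d = d := by rw [hddef, star_sub, hzsa, hxsa]
  have hfoc := foc' ν ρ hν hρ hx0 hxu hmin (d * d)
  have hpd : p * d = c * z := by
    have e1 : p * d = p * z - 1 := by rw [hddef, mul_sub, hpx]
    have e2 : c * z = p * z - 1 := by rw [hcdef, sub_mul, hqz]
    rw [e1, e2]
  have hdp : d * p = z * c := by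
    have e1 : d * p = z * p - 1 := by rw [hddef, sub_mul, hxp]
    have e2 : z * c = z * p - 1 := by rw [hcdef, mul_sub, hzq]
    rw [e1, e2]
  have hform : p * (d * d) * p = c * (z * z) * c := by
    have e1 : p * (d * d) * p = (p * d) * (d * p) := by noncomm_ring
    rw [e1, hpd, hdp]
    noncomm_ring
  have hzzsa : IsSelfAdjoint (z * z) := by
    rw [IsSelfAdjoint, star_mul, hzsa]
  have hbnd : star c * (z * z) * c ≤ ‖z * z‖ • (star c * c) :=
    conj_bound _ hzzsa.le_algebraMap_norm_self c
  rw [hcsa] at hbnd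
  have h7 := re_monotone ρ hρ hbnd
  rw [real_smul_apply, smul_re, hccre, mul_zero] at h7
  have h8 : (ν (d * d)).re ≤ 0 := by
    rw [hfoc]
    calc (ρ (Ring.inverse x * (d * d) * Ring.inverse x)).re
        = (ρ (c * (z * z) * c)).re := by rw [← hpdef, hform]
    _ ≤ 0 := h7
  have h9 : (0:ℂ) ≤ ν (d * d) := by
    have := hν d
    rwa [hdsa] at this
  have h10 := Complex.nonneg_iff.mp h9
  have goal : ν (d * d) = 0 := Complex.ext (le_antisymm h8 h10.1) h10.2.symm
  rw [show star (z - x) = z - x from hdsa, ← hddef]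
  exact goal

/-- Backward step : translating a minimizer by a kernel element preserves the value. -/
lemma step_backward [Nontrivial A]
    (hν : ∀ y : A, 0 ≤ ν (star y * y)) (hρ : ∀ y : A, 0 ≤ ρ (star y * y))
    {x k : A} (hx0 : 0 ≤ x) (hxu : IsUnit x)
    (hmin : ∀ u : A, 0 ≤ u → IsUnit u → Fn ν ρ x ≤ Fn ν ρ u)
    (hk : ν (star k * k) = 0) (hz0 : 0 ≤ x + k) (hzu : IsUnit (x + k)) :
    Fn ν ρ (x + k) = Fn ν ρ x := by
  set p := Ring.inverse x with hpdef
  set q := Ring.inverse (x + k) with hqdef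
  have hpx : p * x = 1 := inverse_mul hxu
  have hxp : x * p = 1 := mul_inverse hxu
  have hqz : q * (x + k) = 1 := inverse_mul hzu
  have hzq : (x + k) * q = 1 := mul_inverse hzu
  have hxsa : star x = x := (IsSelfAdjoint.of_nonneg hx0).star_eq
  have hzsa : star (x + k) = x + k := (IsSelfAdjoint.of_nonneg hz0).star_eq
  have hqsa : star q = q := inverse_star_eq hzsa hzu
  -- ν (x + k) = ν x
  have hνk : ν k = 0 := by
    have h := null_right ν hν hk 1
    rwa [star_one, one_mul] at h
  -- ρ q = ρ p
  have hqp : q - p = -(p * (x * (q * k)) * p) := by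
    have e1 : p * (x * (q * k)) * p = (q * k) * p := by
      rw [← mul_assoc p x, hpx, one_mul]
    have e2 : q * k * p = (q * (x + k)) * p - q * (x * p) := by noncomm_ring
    rw [e1, e2, hqz, one_mul, hxp, mul_one]
    abel
  have hνqk : ν (x * (q * k)) = 0 := by
    have e3 : x * (q * k) = star (q * x) * k := by
      rw [star_mul, hqsa, hxsa, mul_assoc]
    rw [e3]
    exact null_right ν hν hk (q * x)
  have hρq : ρ q = ρ p := by
    have h1 : ρ (q - p) = -ν (x * (q * k)) := by
      rw [hqp, map_neg, foc' ν ρ hν hρ hx0 hxu hmin (x * (q * k))]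
    rw [hνqk, neg_zero, map_sub, sub_eq_zero] at h1
    exact h1
  rw [Fn_def, Fn_def, ← hqdef, ← hpdef, hρq, map_add, Complex.add_re, hνk]
  norm_num

/-- The general C*-algebra version of the theorem. -/
theorem main_general [Nontrivial A]
    (hν : ∀ y : A, 0 ≤ ν (star y * y)) (hρ : ∀ y : A, 0 ≤ ρ (star y * y)) (x : A)
    (hx : (∃ w : A, x = star w * w) ∧ IsUnit x ∧ Fn ν ρ x = sInf (Sn ν ρ)) :
    {x' : A | (∃ w : A, x' = star w * w) ∧ IsUnit x' ∧ Fn ν ρ x' = sInf (Sn ν ρ)}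
      = {z : A | ∃ k : A, ν (star k * k) = 0 ∧ z = x + k} ∩
        {z : A | (∃ w : A, z = star w * w) ∧ IsUnit z} := by
  obtain ⟨hxP, hxU, hxmin⟩ := hx
  have hx0 : 0 ≤ x := (pos_iff x).mp hxP
  have hBdd : BddBelow (Sn ν ρ) := by
    refine ⟨0, fun r hr => ?_⟩
    obtain ⟨u, hP, hU, rfl⟩ := hr
    have h0 := (pos_iff u).mp hP
    have h1 := (Complex.nonneg_iff.mp (apply_nonneg ν hν h0)).1
    have h2 := (Complex.nonneg_iff.mp (apply_nonneg ρ hρ (inverse_nonneg h0 hU))).1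
    linarith
  have hmin : ∀ u : A, 0 ≤ u → IsUnit u → Fn ν ρ x ≤ Fn ν ρ u := by
    intro u h0 hu
    rw [hxmin]
    exact csInf_le hBdd ⟨u, (pos_iff u).mpr h0, hu, rfl⟩
  ext z
  simp only [Set.mem_setOf_eq, Set.mem_inter_iff]
  constructor
  · rintro ⟨hzP, hzU, hzmin⟩
    have hz0 := (pos_iff z).mp hzP
    have hFzx : Fn ν ρ z = Fn ν ρ x := by rw [hzmin, ← hxmin]
    exact ⟨⟨z - x, step_forward ν ρ hν hρ hx0 hxU hz0 hzU hmin hFzx, by abel⟩, hzP, hzU⟩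
  · rintro ⟨⟨k, hk, hzk⟩, hzP, hzU⟩
    subst hzk
    have hz0 := (pos_iff _).mp hzP
    refine ⟨hzP, hzU, ?_⟩
    rw [step_backward ν ρ hν hρ hx0 hxU hmin hk hz0 hzU, hxmin]

end Dev
end MinProofAux

/-- If `x ∈ Min_M(ν,ρ)`, then
`Min_M(ν,ρ) = { x + k : k ∈ I_ν } ∩ { positive invertible elements }`, where
`I_ν = { k : ν(k*k) = 0 }` is the left kernel ideal of `ν`. -/
theorem minSet_eq_translate_kernel
    (ν ρ : M →L[ℂ] ℂ) (hν : IsPosForm ν) (hρ : IsPosForm ρ)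
    (x : M) (hx : x ∈ MinSet ν ρ) :
    MinSet ν ρ =
      {z : M | ∃ k : M, ν (star k * k) = 0 ∧ z = x + k} ∩
      {z : M | (∃ w : M, z = star w * w) ∧ IsUnit z} := by
  letI instPO : PartialOrder M := CStarAlgebra.spectralOrder _
  letI instSOR : StarOrderedRing M := CStarAlgebra.spectralOrderedRing _
  rcases subsingleton_or_nontrivial (↥M) with hsub | hnt
  · ext z
    simp only [MinSet, Set.mem_setOf_eq, Set.mem_inter_iff]
    constructor
    · rintro ⟨hP, hU, -⟩
      exact ⟨⟨0, by simp, Subsingleton.elim _ _⟩, hP, hU⟩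
    · rintro ⟨-, hP, hU⟩
      refine ⟨hP, hU, ?_⟩
      have hSeq : {r : ℝ | ∃ z' : M, (∃ w : M, z' = star w * w) ∧ IsUnit z' ∧
          r = (1/2) * ((ν z').re + (ρ (Ring.inverse z')).re)}
          = {(1/2) * ((ν z).re + (ρ (Ring.inverse z)).re)} := by
        ext r
        simp only [Set.mem_setOf_eq, Set.mem_singleton_iff]
        constructor
        · rintro ⟨z', -, -, rfl⟩
          rw [Subsingleton.elim z' z]
        · rintro rfl
          exact ⟨z, hP, hU, rfl⟩
      rw [hSeq, csInf_singleton]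
  · exact @MinProofAux.main_general (↥M) _ instPO instSOR ν ρ hnt hν hρ x hx
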